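/- arXiv:1303.5148 — 2 statements merged into one kernel-verified Lean document; each statement's English description precedes it below -/
import Mathlib

section
/- Let M, T ≥ 1, let q : {1,…,M} × {1,…,T} → ℝ with q(i,t) > 0, let κ > 0, and let λ : {1,…,T} → ℝ with λ(t) > 0 and Σ_t λ(t) = 1. Define r(i,t) = λ(t)·q(i,t)/Σ_{t'} λ(t')·q(i,t') and λ'(t) = (Σ_{i=1}^M r(i,t) + κ)/(M + T·κ). Then Σ_{i=1}^M log( Σ_t λ'(t)·q(i,t) ) + κ·Σ_t log λ'(t) ≥ Σ_{i=1}^M log( Σ_t λ(t)·q(i,t) ) + κ·Σ_t log λ(t). -/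
lemma jensen_log_aux {T : Type*} [Fintype T] (w a : T → ℝ)
    (hw : ∀ t, 0 < w t) (hws : ∑ t, w t = 1) (ha : ∀ t, 0 < a t) :
    ∑ t, w t * Real.log (a t) ≤ Real.log (∑ t, w t * a t) := by
  have hne : (Finset.univ : Finset T).Nonempty := by
    rcases (Finset.univ (α := T)).eq_empty_or_nonempty with h | h
    · rw [h] at hws; simp at hws
    · exact h
  set m := ∑ t, w t * a t with hm
  have hmpos : 0 < m := Finset.sum_pos (fun t _ => mul_pos (hw t) (ha t)) hne
  have key : ∀ t ∈ Finset.univ, w t * Real.log (a t) ≤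
      w t * (a t / m - 1) + w t * Real.log m := by
    intro t _
    have h1 : Real.log (a t) = Real.log (a t / m) + Real.log m := by
      rw [Real.log_div (ha t).ne' hmpos.ne']; ring
    have h2 : Real.log (a t / m) ≤ a t / m - 1 :=
      Real.log_le_sub_one_of_pos (div_pos (ha t) hmpos)
    rw [h1]
    nlinarith [(hw t).le, h2]
  calc ∑ t, w t * Real.log (a t)
      ≤ ∑ t, (w t * (a t / m - 1) + w t * Real.log m) := Finset.sum_le_sum key
    _ = (∑ t, (w t * a t / m - w t)) + (∑ t, w t) * Real.log m := by
        rw [Finset.sum_add_distrib, ← Finset.sum_mul]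
        congr 1
        exact Finset.sum_congr rfl fun t _ => by ring
    _ = Real.log m := by
        rw [Finset.sum_sub_distrib, ← Finset.sum_div, hws, ← hm, div_self hmpos.ne']
        ring

/-- Monotonicity of the MAP-EM iteration for topic mixture weights with a
symmetric Dirichlet prior with pseudo-count `κ > 0`: the update
`λ' t = (∑ i, r i t + κ) / (M + T κ)` does not decrease the penalized
log-likelihood. -/
theorem map_em_iteration_monotone
    {I T : Type*} [Fintype I] [Nonempty I] [Fintype T] [Nonempty T]
    (q : I → T → ℝ) (hq : ∀ i t, 0 < q i t)
    (κ : ℝ) (hκ : 0 < κ)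
    (lam : T → ℝ) (hlam : ∀ t, 0 < lam t) (hsum : ∑ t, lam t = 1)
    (r : I → T → ℝ)
    (hr : ∀ i t, r i t = lam t * q i t / ∑ t', lam t' * q i t')
    (lam' : T → ℝ)
    (hlam' : ∀ t, lam' t = ((∑ i, r i t) + κ) /
      ((Fintype.card I : ℝ) + (Fintype.card T : ℝ) * κ)) :
    ∑ i, Real.log (∑ t, lam' t * q i t) + κ * ∑ t, Real.log (lam' t) ≥
      ∑ i, Real.log (∑ t, lam t * q i t) + κ * ∑ t, Real.log (lam t) := by
  have hTne : (Finset.univ : Finset T).Nonempty := Finset.univ_nonempty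
  have hS : ∀ i, 0 < ∑ t', lam t' * q i t' :=
    fun i => Finset.sum_pos (fun t _ => mul_pos (hlam t) (hq i t)) hTne
  have hrpos : ∀ i t, 0 < r i t := fun i t => by
    rw [hr]; exact div_pos (mul_pos (hlam t) (hq i t)) (hS i)
  have hrsum : ∀ i, ∑ t, r i t = 1 := fun i => by
    simp only [hr, ← Finset.sum_div]
    exact div_self (hS i).ne'
  set C : ℝ := (Fintype.card I : ℝ) + (Fintype.card T : ℝ) * κ with hCdef
  have hC : 0 < C := by
    have h1 : (0:ℝ) < Fintype.card I := by exact_mod_cast Fintype.card_pos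
    have h2 : (0:ℝ) < Fintype.card T := by exact_mod_cast Fintype.card_pos
    positivity
  set c : T → ℝ := fun t => (∑ i, r i t) + κ with hcdef
  have hcpos : ∀ t, 0 < c t := fun t =>
    add_pos_of_nonneg_of_pos (Finset.sum_nonneg fun i _ => (hrpos i t).le) hκ
  have hcsum : ∑ t, c t = C := by
    simp only [hcdef, Finset.sum_add_distrib, Finset.sum_const, Finset.card_univ,
      nsmul_eq_mul]
    rw [Finset.sum_comm]
    simp [hrsum]
    rfl
  have hlam'pos : ∀ t, 0 < lam' t := fun t => by
    rw [hlam']; exact div_pos (hcpos t) hC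
  have hlam'sum : ∑ t, lam' t = 1 := by
    simp only [hlam', ← Finset.sum_div]
    rw [show (∑ t, ((∑ i, r i t) + κ)) = C from hcsum, div_self hC.ne']
  -- per-observation Jensen step
  have step : ∀ i, ∑ t, r i t * Real.log (lam' t / lam t) ≤
      Real.log (∑ t, lam' t * q i t) - Real.log (∑ t, lam t * q i t) := by
    intro i
    have := jensen_log_aux (fun t => r i t) (fun t => lam' t / lam t)
      (hrpos i) (hrsum i) (fun t => div_pos (hlam'pos t) (hlam t))
    have heq : ∑ t, r i t * (lam' t / lam t) =
        (∑ t, lam' t * q i t) / (∑ t', lam t' * q i t') := by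
      rw [Finset.sum_div]
      refine Finset.sum_congr rfl fun t _ => ?_
      rw [hr]
      field_simp [(hlam t).ne', (hS i).ne']
    rw [heq] at this
    rwa [Real.log_div (Finset.sum_pos (fun t _ => mul_pos (hlam'pos t) (hq i t)) hTne).ne'
      (hS i).ne'] at this
  -- KL nonnegativity
  have hKL : 0 ≤ ∑ t, lam' t * Real.log (lam' t / lam t) := by
    have := jensen_log_aux lam' (fun t => lam t / lam' t) hlam'pos hlam'sum
      (fun t => div_pos (hlam t) (hlam'pos t))
    have heq : ∑ t, lam' t * (lam t / lam' t) = 1 := by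
      rw [← hsum]
      refine Finset.sum_congr rfl fun t _ => ?_
      field_simp [(hlam'pos t).ne']
    rw [heq, Real.log_one] at this
    have heq2 : ∑ t, lam' t * Real.log (lam' t / lam t) =
        -∑ t, lam' t * Real.log (lam t / lam' t) := by
      rw [← Finset.sum_neg_distrib]
      refine Finset.sum_congr rfl fun t _ => ?_
      rw [Real.log_div (hlam'pos t).ne' (hlam t).ne',
        Real.log_div (hlam t).ne' (hlam'pos t).ne']
      ring
    rw [heq2]
    linarith
  -- combine
  have htotal : ∑ t, c t * Real.log (lam' t / lam t) =
      C * ∑ t, lam' t * Real.log (lam' t / lam t) := by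
    rw [Finset.mul_sum]
    refine Finset.sum_congr rfl fun t _ => ?_
    have : c t = C * lam' t := by
      rw [hlam']; field_simp; rfl
    rw [this]; ring
  have hsum' : ∑ i, ∑ t, r i t * Real.log (lam' t / lam t)
      + κ * ∑ t, Real.log (lam' t / lam t)
      = ∑ t, c t * Real.log (lam' t / lam t) := by
    rw [Finset.sum_comm, Finset.mul_sum, ← Finset.sum_add_distrib]
    refine Finset.sum_congr rfl fun t _ => ?_
    rw [hcdef]
    simp only []
    rw [← Finset.sum_mul]
    ring
  have hlogdiff : ∑ t, Real.log (lam' t / lam t) =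
      ∑ t, Real.log (lam' t) - ∑ t, Real.log (lam t) := by
    rw [← Finset.sum_sub_distrib]
    exact Finset.sum_congr rfl fun t _ =>
      Real.log_div (hlam'pos t).ne' (hlam t).ne'
  have hmain : 0 ≤ ∑ i, (Real.log (∑ t, lam' t * q i t) - Real.log (∑ t, lam t * q i t))
      + κ * (∑ t, Real.log (lam' t) - ∑ t, Real.log (lam t)) := by
    have h1 : ∑ i, ∑ t, r i t * Real.log (lam' t / lam t) ≤
        ∑ i, (Real.log (∑ t, lam' t * q i t) - Real.log (∑ t, lam t * q i t)) :=
      Finset.sum_le_sum fun i _ => step i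
    have h2 : 0 ≤ C * ∑ t, lam' t * Real.log (lam' t / lam t) :=
      mul_nonneg hC.le hKL
    rw [← htotal, ← hsum', hlogdiff] at h2
    linarith
  rw [Finset.sum_sub_distrib] at hmain
  linarith
end

section
/- With the notation of the confusion-model setting, let s_i(w') ≥ 0 for w' ∈ b_i be the recognizer confidences in bin i, let r_i(w|w') ≥ 0 for w, w' ∈ b_i be posterior weights, and let S_i(t) = Σ_{w'∈b_i} q(w'|t). Define Q(μ) = Σ_{i=1}^M Σ_{w,w'∈b_i} r_i(w|w')·s_i(w')·log( p_c(w'|w)·(Σ_t e^{μ_t} q(w|t)) / (Σ_t e^{μ_t} S_i(t)) ). Then for every δ ∈ ℝ^T, Q(μ+δ) − Q(μ) ≥ Σ_{i=1}^M Σ_{w,w'∈b_i} r_i(w|w')·s_i(w')·[ 1 + (Σ_t e^{μ_t} q(w|t) δ_t)/(Σ_t e^{μ_t} q(w|t)) − (Σ_t e^{μ_t+δ_t} S_i(t))/(Σ_t e^{μ_t} S_i(t)) ]. -/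
open Finset

lemma jensen_log_aux_s16 {T : Type*} [Fintype T] [Nonempty T]
    (μ δ c : T → ℝ) (hc : ∀ t, 0 < c t) :
    (∑ t, Real.exp (μ t) * c t * δ t) / (∑ t, Real.exp (μ t) * c t) ≤
      Real.log (∑ t, Real.exp (μ t + δ t) * c t) - Real.log (∑ t, Real.exp (μ t) * c t) := by
  set w : T → ℝ := fun t => Real.exp (μ t) * c t with hw
  have hwpos : ∀ t, 0 < w t := fun t => mul_pos (Real.exp_pos _) (hc t)
  have hA : 0 < ∑ t, w t := Finset.sum_pos (fun t _ => hwpos t) univ_nonempty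
  have hA' : 0 < ∑ t, Real.exp (μ t + δ t) * c t :=
    Finset.sum_pos (fun t _ => mul_pos (Real.exp_pos _) (hc t)) univ_nonempty
  have hcm := convexOn_exp.map_centerMass_le (t := (univ : Finset T)) (w := w) (p := δ)
      (fun t _ => (hwpos t).le) hA (fun t _ => Set.mem_univ _)
  rw [Finset.centerMass, Finset.centerMass] at hcm
  simp only [smul_eq_mul, Function.comp] at hcm
  have hrw : (∑ t, w t * Real.exp (δ t)) = ∑ t, Real.exp (μ t + δ t) * c t := by
    apply Finset.sum_congr rfl
    intro t _
    rw [hw]; simp [Real.exp_add]; ring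
  rw [hrw] at hcm
  have h1 : (∑ t, Real.exp (μ t) * c t * δ t) / (∑ t, Real.exp (μ t) * c t)
      = (∑ t, w t)⁻¹ * ∑ t, w t * δ t := by
    rw [div_eq_inv_mul]
  rw [h1]
  have := (Real.le_log_iff_exp_le (by positivity : (0:ℝ) < (∑ t, w t)⁻¹ * ∑ t, Real.exp (μ t + δ t) * c t)).2 hcm
  calc (∑ t, w t)⁻¹ * ∑ t, w t * δ t
      ≤ Real.log ((∑ t, w t)⁻¹ * ∑ t, Real.exp (μ t + δ t) * c t) := this
    _ = Real.log (∑ t, Real.exp (μ t + δ t) * c t) - Real.log (∑ t, w t) := by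
        rw [Real.log_mul (by positivity) hA'.ne', Real.log_inv]; ring

/-- Expected-counts version of the lower bound on the `Q`-difference in the
confusion model: each 1-best term is replaced by a confidence-weighted sum
over the words of the bin.  Here `s i w'` is the recognizer confidence of
`w'` in bin `i`, `r i w w'` is the posterior weight `r_i(w|w')`,
`pc v w = p_c(v|w)`, and `S_i(t) = ∑_{w' ∈ b i} q w' t`. -/
theorem Q_diff_ge_lower_bound_expected_counts
    {V : Type*} [Fintype V] {T : Type*} [Fintype T] [Nonempty T]
    (M : ℕ) (b : Fin M → Finset V) (hb : ∀ i, (b i).Nonempty)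
    (pc : V → V → ℝ) (hpc : ∀ v w, 0 < pc v w)
    (q : V → T → ℝ) (hq : ∀ w t, 0 < q w t)
    (s : Fin M → V → ℝ) (hs : ∀ i, ∀ w' ∈ b i, 0 ≤ s i w')
    (r : Fin M → V → V → ℝ) (hr : ∀ i, ∀ w ∈ b i, ∀ w' ∈ b i, 0 ≤ r i w w')
    (μ δ : T → ℝ) :
    (∑ i, ∑ w ∈ b i, ∑ w' ∈ b i, r i w w' * s i w' *
        Real.log (pc w' w * (∑ t, Real.exp (μ t + δ t) * q w t) /
          (∑ t, Real.exp (μ t + δ t) * ∑ w'' ∈ b i, q w'' t))) -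
    (∑ i, ∑ w ∈ b i, ∑ w' ∈ b i, r i w w' * s i w' *
        Real.log (pc w' w * (∑ t, Real.exp (μ t) * q w t) /
          (∑ t, Real.exp (μ t) * ∑ w'' ∈ b i, q w'' t))) ≥
    ∑ i, ∑ w ∈ b i, ∑ w' ∈ b i, r i w w' * s i w' *
      (1 + (∑ t, Real.exp (μ t) * q w t * δ t) / (∑ t, Real.exp (μ t) * q w t)
         - (∑ t, Real.exp (μ t + δ t) * ∑ w'' ∈ b i, q w'' t) /
             (∑ t, Real.exp (μ t) * ∑ w'' ∈ b i, q w'' t)) := by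
  rw [ge_iff_le, ← Finset.sum_sub_distrib]
  apply Finset.sum_le_sum
  intro i _
  rw [← Finset.sum_sub_distrib]
  apply Finset.sum_le_sum
  intro w hw
  rw [← Finset.sum_sub_distrib]
  apply Finset.sum_le_sum
  intro w' hw'
  rw [← mul_sub]
  apply mul_le_mul_of_nonneg_left _ (mul_nonneg (hr i w hw w' hw') (hs i w' hw'))
  -- core inequality
  set S : T → ℝ := fun t => ∑ w'' ∈ b i, q w'' t with hS
  have hSpos : ∀ t, 0 < S t := fun t => Finset.sum_pos (fun v _ => hq v t) (hb i)
  have hA : 0 < ∑ t, Real.exp (μ t) * q w t :=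
    Finset.sum_pos (fun t _ => mul_pos (Real.exp_pos _) (hq w t)) univ_nonempty
  have hA' : 0 < ∑ t, Real.exp (μ t + δ t) * q w t :=
    Finset.sum_pos (fun t _ => mul_pos (Real.exp_pos _) (hq w t)) univ_nonempty
  have hB : 0 < ∑ t, Real.exp (μ t) * S t :=
    Finset.sum_pos (fun t _ => mul_pos (Real.exp_pos _) (hSpos t)) univ_nonempty
  have hB' : 0 < ∑ t, Real.exp (μ t + δ t) * S t :=
    Finset.sum_pos (fun t _ => mul_pos (Real.exp_pos _) (hSpos t)) univ_nonempty
  have hJ := jensen_log_aux_s16 μ δ (q w) (fun t => hq w t)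
  have hlog : Real.log ((∑ t, Real.exp (μ t + δ t) * S t) / (∑ t, Real.exp (μ t) * S t)) ≤
      (∑ t, Real.exp (μ t + δ t) * S t) / (∑ t, Real.exp (μ t) * S t) - 1 :=
    Real.log_le_sub_one_of_pos (by positivity)
  rw [Real.log_div (hB'.ne') hB.ne'] at hlog
  rw [Real.log_div (mul_pos (hpc w' w) hA').ne' hB'.ne', Real.log_mul (hpc w' w).ne' hA'.ne',
    Real.log_div (mul_pos (hpc w' w) hA).ne' hB.ne', Real.log_mul (hpc w' w).ne' hA.ne']
  linarith
end
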